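/- Let X be a metric space, G a group acting on X by isometries, and ε : G → ℝ a conjugation-invariant assignment. Define the thin part X₋ := ⋃_{γ ∈ G, γ ≠ 1} {x ∈ X : d(x, γ·x) < ε(γ)}, and assume additionally that each sublevel set {x ∈ X : d(x, γ·x) < ε(γ)} (for γ ≠ 1) is a connected subset of X. If W is a connected component of X₋, x ∈ W, and γ ∈ G with γ ≠ 1 satisfies d(x, γ·x) < ε(γ), then γ·W = W. -/

import Mathlib

open Pointwise

/-- With `X₋` the thin part for a conjugation-invariant assignment `ε`, assuming each
sublevel set `{x | d(x, γ·x) < ε γ}` (for `γ ≠ 1`) is connected: if `W` is a connected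
component of `X₋`, `x ∈ W`, and `γ ≠ 1` satisfies `d(x, γ·x) < ε γ`, then `γ·W = W`. -/
theorem thin_component_stabilized {G X : Type*} [Group G] [MetricSpace X]
    [MulAction G X] [IsIsometricSMul G X] (ε : G → ℝ)
    (hε : ∀ g γ : G, ε (g * γ * g⁻¹) = ε γ)
    (Xminus : Set X)
    (hXminus : Xminus = ⋃ γ ∈ {γ : G | γ ≠ 1}, {x : X | dist x (γ • x) < ε γ})
    (hconn : ∀ γ : G, γ ≠ 1 → IsPreconnected {x : X | dist x (γ • x) < ε γ})
    (W : Set X) (hW : ∃ y ∈ Xminus, W = connectedComponentIn Xminus y)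
    (x : X) (hx : x ∈ W) (γ : G) (hγ : γ ≠ 1) (hd : dist x (γ • x) < ε γ) :
    γ • W = W := by
  obtain ⟨y, hy, rfl⟩ := hW
  -- W as component of x
  have hWx : connectedComponentIn Xminus y = connectedComponentIn Xminus x :=
    connectedComponentIn_eq hx
  -- The sublevel set
  set S : Set X := {z : X | dist z (γ • z) < ε γ} with hS
  have hSsub : S ⊆ Xminus := by
    rw [hXminus]
    intro z hz
    exact Set.mem_biUnion hγ hz
  have hxS : x ∈ S := hd
  have hSW : S ⊆ connectedComponentIn Xminus x :=
    (hconn γ hγ).subset_connectedComponentIn hxS hSsub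
  have hγxS : γ • x ∈ S := by
    show dist (γ • x) (γ • (γ • x)) < ε γ
    rw [dist_smul]
    exact hd
  have hγxW : γ • x ∈ connectedComponentIn Xminus x := hSW hγxS
  -- γ preserves Xminus
  have hXinv : γ • Xminus = Xminus := by
    rw [hXminus]
    ext z
    simp only [Set.mem_smul_set, Set.mem_iUnion, Set.mem_setOf_eq]
    constructor
    · rintro ⟨w, ⟨δ, hδ1, hδ2⟩, rfl⟩
      refine ⟨γ * δ * γ⁻¹, ?_, ?_⟩
      · intro h
        apply hδ1
        have : γ * δ * γ⁻¹ = 1 := h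
        calc δ = γ⁻¹ * (γ * δ * γ⁻¹) * γ := by group
        _ = 1 := by rw [this]; group
      · rw [hε γ δ]
        have : (γ * δ * γ⁻¹) • γ • w = γ • δ • w := by
          rw [← smul_smul, ← smul_smul, inv_smul_smul]
        rw [this, dist_smul]
        exact hδ2
    · rintro ⟨δ, hδ1, hδ2⟩
      refine ⟨γ⁻¹ • z, ⟨γ⁻¹ * δ * γ, ?_, ?_⟩, smul_inv_smul γ z⟩
      · intro h
        apply hδ1
        calc δ = γ * (γ⁻¹ * δ * γ) * γ⁻¹ := by group
        _ = 1 := by rw [h]; group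
      · have h1 : ε (γ⁻¹ * δ * γ) = ε δ := by
          have := hε γ⁻¹ δ
          simpa using this
        rw [h1]
        have : (γ⁻¹ * δ * γ) • γ⁻¹ • z = γ⁻¹ • δ • z := by
          rw [← smul_smul, ← smul_smul, smul_inv_smul]
        rw [this, dist_smul]
        exact hδ2
  -- image of component under the homeomorphism of smul by γ
  have hxX : x ∈ Xminus := hSsub hxS
  have himg : γ • connectedComponentIn Xminus x
      = connectedComponentIn (γ • Xminus) (γ • x) := by
    have := (Homeomorph.smul γ (α := X)).image_connectedComponentIn hxX
    simpa [Set.image_smul] using this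
  rw [hWx, himg, hXinv]
  exact (connectedComponentIn_eq hγxW).symm
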